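/- For all integers a, b ≥ 2, the equitable dominator chromatic number of the line graph of the bi-star S_{a,b} equals max{a, b} + 1, i.e., χ_ed(L(S_{a,b})) = max{a, b} + 1. -/

import Mathlib

open SimpleGraph

/-- `c` is an equitable dominator coloring of `G` with `n` colors: it is a proper vertex
coloring, every vertex dominates some nonempty color class (each vertex of that class lies in
its closed neighborhood), and any two color classes differ in cardinality by at most 1. -/
def IsEDColoring {V : Type*} (G : SimpleGraph V) {n : ℕ} (c : V → Fin n) : Prop :=
  (∀ ⦃u v : V⦄, G.Adj u v → c u ≠ c v) ∧
  (∀ v : V, ∃ j : Fin n, (∃ u, c u = j) ∧ ∀ u, c u = j → u = v ∨ G.Adj v u) ∧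
  (∀ i j : Fin n, {u | c u = i}.ncard ≤ {u | c u = j}.ncard + 1)

/-- The equitable dominator chromatic number of `G`: the least number of colors admitting an
equitable dominator coloring of `G`. -/
noncomputable def edcn {V : Type*} (G : SimpleGraph V) : ℕ :=
  sInf {n : ℕ | ∃ c : V → Fin n, IsEDColoring G c}
/-- The bi-star `S_{a,b}`: two stars `K_{1,a}` and `K_{1,b}` whose centers (`Sum.inl none`
and `Sum.inr none`) are joined by an edge. -/
def biStar (a b : ℕ) : SimpleGraph (Option (Fin a) ⊕ Option (Fin b)) :=
  SimpleGraph.fromRel (fun x y =>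
    (x = Sum.inl none ∧ y = Sum.inr none) ∨
    (x = Sum.inl none ∧ ∃ i : Fin a, y = Sum.inl (some i)) ∨
    (x = Sum.inr none ∧ ∃ j : Fin b, y = Sum.inr (some j)))

namespace EDaux

variable {a b : ℕ}

/-- model for the edges of the bi-star -/
abbrev M (a b : ℕ) := Option (Fin a ⊕ Fin b)

def embE (a b : ℕ) : M a b → Sym2 (Option (Fin a) ⊕ Option (Fin b))
  | none => s(Sum.inl none, Sum.inr none)
  | some (Sum.inl i) => s(Sum.inl none, Sum.inl (some i))
  | some (Sum.inr j) => s(Sum.inr none, Sum.inr (some j))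

lemma embE_mem (m : M a b) : embE a b m ∈ (biStar a b).edgeSet := by
  rcases m with _ | (i | j) <;> simp [embE, biStar]

lemma embE_inj : Function.Injective (embE a b) := by
  rintro (_ | (i | j)) (_ | (i' | j')) h <;>
    simp [embE, Sym2.eq_iff] at h <;> aesop

lemma embE_surj (e : Sym2 (Option (Fin a) ⊕ Option (Fin b)))
    (he : e ∈ (biStar a b).edgeSet) : ∃ m, embE a b m = e := by
  induction e using Sym2.ind with
  | _ x y =>
    rw [SimpleGraph.mem_edgeSet] at he
    rw [biStar, SimpleGraph.fromRel_adj] at he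
    obtain ⟨hne, h | h⟩ := he
    · rcases h with ⟨hx, hy⟩ | ⟨hx, i, hy⟩ | ⟨hx, j, hy⟩
      · exact ⟨none, by simp [embE, hx, hy]⟩
      · exact ⟨some (Sum.inl i), by simp [embE, hx, hy]⟩
      · exact ⟨some (Sum.inr j), by simp [embE, hx, hy]⟩
    · rcases h with ⟨hy, hx⟩ | ⟨hy, i, hx⟩ | ⟨hy, j, hx⟩
      · exact ⟨none, by rw [hx, hy]; exact Sym2.eq_swap⟩
      · exact ⟨some (Sum.inl i), by rw [hx, hy]; exact Sym2.eq_swap⟩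
      · exact ⟨some (Sum.inr j), by rw [hx, hy]; exact Sym2.eq_swap⟩

noncomputable def eqvE (a b : ℕ) : M a b ≃ (biStar a b).edgeSet :=
  Equiv.ofBijective (fun m => ⟨embE a b m, embE_mem m⟩)
    ⟨fun m m' h => embE_inj (congrArg Subtype.val h),
     fun e => by obtain ⟨m, hm⟩ := embE_surj e.1 e.2; exact ⟨m, Subtype.ext hm⟩⟩

lemma eqvE_val (m : M a b) : (eqvE a b m : Sym2 _) = embE a b m := rfl

lemma eqvE_ne {m m' : M a b} (h : m ≠ m') : eqvE a b m ≠ eqvE a b m' :=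
  fun he => h ((eqvE a b).injective he)

lemma adj_none {m : M a b} (h : m ≠ none) :
    (biStar a b).lineGraph.Adj (eqvE a b m) (eqvE a b none) := by
  refine ⟨eqvE_ne h, ?_⟩
  rcases m with _ | (i | j)
  · exact absurd rfl h
  · exact ⟨Sum.inl none, by simp [eqvE_val, embE]⟩
  · exact ⟨Sum.inr none, by simp [eqvE_val, embE]⟩

lemma adj_inl {i i' : Fin a} (h : i ≠ i') :
    (biStar a b).lineGraph.Adj (eqvE a b (some (Sum.inl i))) (eqvE a b (some (Sum.inl i'))) := by
  refine ⟨eqvE_ne (by simpa using h), ⟨Sum.inl none, by simp [eqvE_val, embE]⟩⟩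

lemma adj_inr {j j' : Fin b} (h : j ≠ j') :
    (biStar a b).lineGraph.Adj (eqvE a b (some (Sum.inr j))) (eqvE a b (some (Sum.inr j'))) := by
  refine ⟨eqvE_ne (by simpa using h), ⟨Sum.inr none, by simp [eqvE_val, embE]⟩⟩

lemma not_adj_mixed {i : Fin a} {j : Fin b} :
    ¬ (biStar a b).lineGraph.Adj (eqvE a b (some (Sum.inl i))) (eqvE a b (some (Sum.inr j))) := by
  rintro ⟨-, x, hx⟩
  obtain ⟨h1, h2⟩ := hx
  simp only [eqvE_val, SetLike.mem_coe] at h1 h2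
  rw [show embE a b (some (Sum.inl i)) = s(Sum.inl none, Sum.inl (some i)) from rfl,
    Sym2.mem_iff] at h1
  rw [show embE a b (some (Sum.inr j)) = s(Sum.inr none, Sum.inr (some j)) from rfl,
    Sym2.mem_iff] at h2
  rcases h1 with rfl | rfl <;> rcases h2 with h | h <;> simp_all

/-- the coloring -/
def col (a b : ℕ) : M a b → Fin (max a b + 1)
  | none => ⟨0, by omega⟩
  | some (Sum.inl i) => ⟨i.val + 1, by have := i.isLt; omega⟩
  | some (Sum.inr j) => ⟨j.val + 1, by have := j.isLt; omega⟩

end EDaux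

open EDaux in
theorem edcn_lineGraph_biStar (a b : ℕ) (ha : 2 ≤ a) (hb : 2 ≤ b) :
    edcn (biStar a b).lineGraph = max a b + 1 := by
  set n := max a b + 1 with hn
  set G := (biStar a b).lineGraph
  -- the coloring on the edge set
  set c : (biStar a b).edgeSet → Fin n := fun u => col a b ((eqvE a b).symm u) with hc
  have hcol : ∀ m : M a b, c (eqvE a b m) = col a b m := by
    intro m; simp [hc]
  have hclass : ∀ j : Fin n, {u | c u = j} = eqvE a b '' {m | col a b m = j} := by
    intro j
    ext u
    constructor
    · intro hu
      exact ⟨(eqvE a b).symm u, hu, by simp⟩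
    · rintro ⟨m, hm, rfl⟩
      simpa [hcol] using hm
  have hmem : ∃ c : (biStar a b).edgeSet → Fin n, IsEDColoring G c := by
    refine ⟨c, ?_, ?_, ?_⟩
    · -- proper
      intro u v huv
      obtain ⟨m, rfl⟩ := (eqvE a b).surjective u
      obtain ⟨m', rfl⟩ := (eqvE a b).surjective v
      have hne : m ≠ m' := fun h => huv.ne (by rw [h])
      rw [hcol, hcol]
      rcases m with _ | (i | j) <;> rcases m' with _ | (i' | j')
      · exact absurd rfl hne
      · simp [col, Fin.ext_iff]
      · simp [col, Fin.ext_iff]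
      · simp [col, Fin.ext_iff]
      · have hii : (i : ℕ) ≠ (i' : ℕ) := fun h => hne (by simp [Fin.ext_iff, h])
        simp [col, Fin.ext_iff]; omega
      · exact absurd huv not_adj_mixed
      · simp [col, Fin.ext_iff]
      · exact absurd huv.symm not_adj_mixed
      · have hjj : (j : ℕ) ≠ (j' : ℕ) := fun h => hne (by simp [Fin.ext_iff, h])
        simp [col, Fin.ext_iff]; omega
    · -- domination: everyone dominates the class of color 0, which is {middle edge}
      intro v
      refine ⟨⟨0, by omega⟩, ⟨eqvE a b none, by simp [hcol, col]⟩, ?_⟩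
      intro u hu
      obtain ⟨m, rfl⟩ := (eqvE a b).surjective u
      rw [hcol] at hu
      have hm : m = none := by
        rcases m with _ | (i | j) <;> simp_all [col, Fin.ext_iff]
      subst hm
      obtain ⟨m', rfl⟩ := (eqvE a b).surjective v
      by_cases h : m' = none
      · subst h; exact Or.inl rfl
      · exact Or.inr (adj_none h)
    · -- equitable
      have key : ∀ j : Fin n, 1 ≤ {u | c u = j}.ncard ∧ {u | c u = j}.ncard ≤ 2 := by
        intro j
        rw [hclass, Set.ncard_image_of_injective _ (eqvE a b).injective]
        obtain ⟨jv, hj⟩ := j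
        constructor
        · -- nonempty
          rw [Nat.one_le_iff_ne_zero, Ne, Set.ncard_eq_zero (Set.toFinite _),
            ← Ne, ← Set.nonempty_iff_ne_empty]
          rcases Nat.eq_zero_or_pos jv with h0 | hpos
          · exact ⟨none, by subst h0; rfl⟩
          · by_cases hja : jv - 1 < a
            · exact ⟨some (Sum.inl ⟨jv - 1, hja⟩), by simp [col, Fin.ext_iff]; omega⟩
            · have hjb : jv - 1 < b := by omega
              exact ⟨some (Sum.inr ⟨jv - 1, hjb⟩), by simp [col, Fin.ext_iff]; omega⟩
        · -- at most 2
          rcases Nat.eq_zero_or_pos jv with h0 | hpos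
          · have : {m : M a b | col a b m = ⟨jv, hj⟩} ⊆ {none} := by
              rintro (_ | (i | j)) hm
              · exact Set.mem_singleton _
              · simp only [Set.mem_setOf_eq, col, Fin.mk.injEq] at hm; omega
              · simp only [Set.mem_setOf_eq, col, Fin.mk.injEq] at hm; omega
            calc ({m : M a b | col a b m = ⟨jv, hj⟩}).ncard ≤ ({none} : Set (M a b)).ncard :=
                  Set.ncard_le_ncard this (Set.toFinite _)
              _ ≤ 2 := by simp
          · have : {m : M a b | col a b m = ⟨jv, hj⟩} ⊆
                {some (Sum.inl ⟨(jv - 1) % a, Nat.mod_lt _ (by omega)⟩),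
                 some (Sum.inr ⟨(jv - 1) % b, Nat.mod_lt _ (by omega)⟩)} := by
              rintro (_ | (i | j)) hm
              · simp [col, Fin.ext_iff] at hm; omega
              · simp only [Set.mem_setOf_eq, col, Fin.mk.injEq] at hm
                have ha' : (jv - 1) % a = jv - 1 := Nat.mod_eq_of_lt (by omega)
                simp [Fin.ext_iff, ha']; omega
              · simp only [Set.mem_setOf_eq, col, Fin.mk.injEq] at hm
                have hb' : (jv - 1) % b = jv - 1 := Nat.mod_eq_of_lt (by omega)
                simp [Fin.ext_iff, hb']; omega
            calc ({m : M a b | col a b m = ⟨jv, hj⟩}).ncard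
                ≤ _ := Set.ncard_le_ncard this (Set.toFinite _)
              _ ≤ 2 := by
                  refine (Set.ncard_insert_le _ _).trans ?_
                  simp
      intro i j
      calc {u | c u = i}.ncard ≤ 2 := (key i).2
        _ ≤ {u | c u = j}.ncard + 1 := by have := (key j).1; omega
  refine le_antisymm (Nat.sInf_le hmem) (le_csInf ⟨n, hmem⟩ ?_)
  rintro k ⟨d, hd, -, -⟩
  -- proper coloring needs at least max a b + 1 colors: two big cliques
  have hA : a + 1 ≤ k := by
    have hinj : Function.Injective
        (fun o : Option (Fin a) => d (eqvE a b (o.map Sum.inl))) := by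
      rintro (_ | i) (_ | i') h
      · rfl
      · exact absurd h (hd (adj_none (by simp)).symm)
      · exact absurd h (hd (adj_none (by simp)))
      · by_contra hne
        exact hd (adj_inl (by simpa using hne)) h
    simpa using Fintype.card_le_of_injective _ hinj
  have hB : b + 1 ≤ k := by
    have hinj : Function.Injective
        (fun o : Option (Fin b) => d (eqvE a b (o.map Sum.inr))) := by
      rintro (_ | j) (_ | j') h
      · rfl
      · exact absurd h (hd (adj_none (by simp)).symm)
      · exact absurd h (hd (adj_none (by simp)))
      · by_contra hne
        exact hd (adj_inr (by simpa using hne)) h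
    simpa using Fintype.card_le_of_injective _ hinj
  omega
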